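/- Under the Bradley–Terry model with implicit reward r, for any state s with reference completion y_s^ref, the optimal soft value satisfies V_t^{*,η}(s) = r(y_s^ref) + η·log E_{y_s∼π_ref}[exp(η^{-1}·Ψ(P*(y_s ≻ y_s^ref))) | s_t = s], where Ψ(t) = log(t/(1−t)) and P*(y ≻ y') = σ(r(y) − r(y')). -/

import Mathlib

noncomputable def logistic (x : ℝ) : ℝ := 1 / (1 + Real.exp (-x))
noncomputable def logit (t : ℝ) : ℝ := Real.log (t / (1 - t))

lemma logit_logistic (x : ℝ) : logit (logistic x) = x := by
  unfold logit logistic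
  have h : (0:ℝ) < 1 + Real.exp (-x) := by positivity
  have h1 : 1 - 1 / (1 + Real.exp (-x)) = Real.exp (-x) / (1 + Real.exp (-x)) := by
    field_simp
    ring
  rw [h1]
  have h2 : (1 / (1 + Real.exp (-x))) / (Real.exp (-x) / (1 + Real.exp (-x)))
      = Real.exp x := by
    rw [div_div_div_eq]
    rw [one_mul, mul_comm, ← div_div, div_div_cancel_left' (ne_of_gt h), ← Real.exp_neg, neg_neg]
  rw [h2, Real.log_exp]

theorem stmt7 {Y : Type*} [Fintype Y] (μ : Y → ℝ) (hpos : ∀ y, 0 < μ y)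
    (hsum : ∑ y, μ y = 1) (r : Y → ℝ) (yref : Y) (η : ℝ) (hη : 0 < η)
    (Pstar : Y → Y → ℝ) (hP : ∀ y y', Pstar y y' = logistic (r y - r y')) :
    η * Real.log (∑ y, μ y * Real.exp (η⁻¹ * r y)) =
      r yref + η * Real.log (∑ y, μ y * Real.exp (η⁻¹ * logit (Pstar y yref))) := by
  have hlog : ∀ y, logit (Pstar y yref) = r y - r yref := by
    intro y; rw [hP, logit_logistic]
  have key : (∑ y, μ y * Real.exp (η⁻¹ * r y))
      = Real.exp (η⁻¹ * r yref) * ∑ y, μ y * Real.exp (η⁻¹ * logit (Pstar y yref)) := by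
    rw [Finset.mul_sum]
    congr 1; ext y
    rw [hlog y, mul_sub, Real.exp_sub]
    field_simp [Real.exp_ne_zero]
  have hspos : (0:ℝ) < ∑ y, μ y * Real.exp (η⁻¹ * logit (Pstar y yref)) := by
    apply Finset.sum_pos
    · intro y _; exact mul_pos (hpos y) (Real.exp_pos _)
    · exact Finset.univ_nonempty_iff.mpr ⟨yref⟩
  rw [key, Real.log_mul (Real.exp_ne_zero _) (ne_of_gt hspos), Real.log_exp]
  field_simp
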